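/- arXiv:1905.09413 — 3 statements merged into one kernel-verified Lean document; each statement's English description precedes it below -/
import Mathlib

section
/- For a qubit with states |ψ⟩ = cosθ|0⟩ + sinθ|1⟩ and |φ⟩ = cosθ|0⟩ − sinθ|1⟩ prepared with probabilities p and 1−p respectively, the minimum over all POVMs {E_ψ, E_φ} (E_ψ, E_φ ⪰ 0, E_ψ + E_φ = I) of the error probability p·Tr(|ψ⟩⟨ψ| E_φ) + (1−p)·Tr(|φ⟩⟨φ| E_ψ) equals (1/2)(1 − √(1 − 4p(1−p)|⟨ψ|φ⟩|²)). -/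
open Real Matrix

lemma psd2 (a b d : ℝ) (ha : 0 ≤ a) (hd : 0 ≤ d) (hdet : b^2 ≤ a*d) :
    (!![a, b; b, d] : Matrix (Fin 2) (Fin 2) ℝ).PosSemidef := by
  rw [Matrix.posSemidef_iff_dotProduct_mulVec]
  constructor
  · ext i j
    fin_cases i <;> fin_cases j <;> simp [Matrix.conjTranspose_apply]
  · intro x
    have : dotProduct (star x) ((!![a, b; b, d] : Matrix (Fin 2) (Fin 2) ℝ) *ᵥ x)
        = a * (x 0)^2 + 2*b*(x 0)*(x 1) + d*(x 1)^2 := by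
      simp [dotProduct, Matrix.mulVec, Fin.sum_univ_two]
      ring
    rw [this]
    rcases eq_or_lt_of_le ha with h|h
    · have hb : b = 0 := by nlinarith
      subst hb; nlinarith [sq_nonneg (x 1)]
    · nlinarith [sq_nonneg (a * x 0 + b * x 1), sq_nonneg (x 1), mul_nonneg (le_of_lt h) hd]

lemma psd2' (M : Matrix (Fin 2) (Fin 2) ℝ) (h : M.PosSemidef) :
    M 1 0 = M 0 1 ∧ 0 ≤ M 0 0 ∧ 0 ≤ M 1 1 ∧ (M 0 1)^2 ≤ M 0 0 * M 1 1 := by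
  obtain ⟨hH, hQ⟩ := Matrix.posSemidef_iff_dotProduct_mulVec.mp h
  have hs : M 1 0 = M 0 1 := by
    have := congrFun (congrFun hH 0) 1
    simpa [Matrix.conjTranspose_apply] using this
  have key : ∀ x0 x1 : ℝ, 0 ≤ M 0 0 * x0^2 + 2 * M 0 1 * x0 * x1 + M 1 1 * x1^2 := by
    intro x0 x1
    have h2 := hQ ![x0, x1]
    simp [dotProduct, Matrix.mulVec, Fin.sum_univ_two] at h2
    rw [hs] at h2
    nlinarith [h2]
  refine ⟨hs, by simpa using key 1 0, by simpa using key 0 1, ?_⟩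
  have h3 : ∀ x : ℝ, 0 ≤ M 0 0 * (x*x) + (2 * M 0 1) * x + M 1 1 := fun x => by
    nlinarith [key x 1]
  have := discrim_le_zero h3
  rw [discrim] at this
  nlinarith [this]

lemma key_ineq (t m b S q r w : ℝ) (hS0 : 0 ≤ S) (htS : t^2 ≤ S^2)
    (hS4 : S^2 = 4*m^2 + 4*b^2) (hq1 : -1 ≤ q) (hq2 : q ≤ 1)
    (hc1 : r^2 + 4*w^2 ≤ (1-q)^2) (hc2 : r^2 + 4*w^2 ≤ (1+q)^2) :
    0 ≤ t*q/2 + m*r + 2*b*w + S/2 := by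
  have ht1 : t ≤ S := by nlinarith
  have ht2 : -S ≤ t := by nlinarith
  rcases le_or_gt 0 q with hq | hq
  · have hY : 0 ≤ S/2*(1-q) := by
      have h1q : 0 ≤ 1 - q := by linarith
      positivity
    have h1 : (m*r + 2*b*w)^2 ≤ (S/2*(1-q))^2 := by
      nlinarith [sq_nonneg (2*m*w - b*r),
        mul_le_mul_of_nonneg_left hc1 (by positivity : (0:ℝ) ≤ m^2 + b^2)]
    have h2 : -(S/2*(1-q)) ≤ m*r + 2*b*w := by
      nlinarith [h1, hY, sq_nonneg (m*r + 2*b*w + S/2*(1-q))]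
    have h3 : -S*q ≤ t*q := mul_le_mul_of_nonneg_right ht2 hq
    nlinarith [h2, h3]
  · have hY : 0 ≤ S/2*(1+q) := by
      have h1q : 0 ≤ 1 + q := by linarith
      positivity
    have h1 : (m*r + 2*b*w)^2 ≤ (S/2*(1+q))^2 := by
      nlinarith [sq_nonneg (2*m*w - b*r),
        mul_le_mul_of_nonneg_left hc2 (by positivity : (0:ℝ) ≤ m^2 + b^2)]
    have h2 : -(S/2*(1+q)) ≤ m*r + 2*b*w := by
      nlinarith [h1, hY, sq_nonneg (m*r + 2*b*w + S/2*(1+q))]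
    have h3 : S*q ≤ t*q := mul_le_mul_of_nonpos_right ht1 (le_of_lt hq)
    nlinarith [h2, h3]

set_option maxHeartbeats 2000000 in
/-- Helstrom bound for binary minimum-error discrimination of the pure
qubit states |ψ⟩ = cosθ|0⟩ + sinθ|1⟩ and |φ⟩ = cosθ|0⟩ − sinθ|1⟩ with priors p, 1−p:
the minimum over POVMs {E_ψ, E_φ} of the error probability equals
(1/2)(1 − √(1 − 4p(1−p)|⟨ψ|φ⟩|²)), where |⟨ψ|φ⟩|² = cos²(2θ). -/
theorem stmt_1 (θ p : ℝ) (hp : p ∈ Set.Icc (0:ℝ) 1)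
    (ψ φ : Fin 2 → ℝ) (hψ : ψ = ![Real.cos θ, Real.sin θ])
    (hφ : φ = ![Real.cos θ, -Real.sin θ]) :
    IsLeast
      {x : ℝ | ∃ E : Matrix (Fin 2) (Fin 2) ℝ,
        E.PosSemidef ∧ (1 - E).PosSemidef ∧
        x = p * ((vecMulVec ψ ψ) * (1 - E)).trace
            + (1 - p) * ((vecMulVec φ φ) * E).trace}
      ((1/2) * (1 - Real.sqrt (1 - 4*p*(1-p) * (Real.cos (2*θ))^2))) := by
  obtain ⟨hp0, hp1⟩ := hp
  set c := Real.cos θ with hc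
  set s := Real.sin θ with hs
  have hcs : s^2 + c^2 = 1 := Real.sin_sq_add_cos_sq θ
  have hcos2 : Real.cos (2*θ) = c^2 - s^2 := by
    rw [Real.cos_two_mul]; rw [hc, hs]; nlinarith [Real.sin_sq_add_cos_sq θ]
  clear_value c s
  set m : ℝ := (1-2*p)*(c^2-s^2)/2 with hm
  set b : ℝ := -(c*s) with hb
  clear_value m b
  set A : ℝ := 1 - 4*p*(1-p) * (Real.cos (2*θ))^2 with hA
  have hAeq : A = 4*m^2 + 4*b^2 := by
    rw [hA, hcos2, hm, hb]
    linear_combination (-(1+c^2+s^2))*hcs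
  clear_value A
  set S : ℝ := Real.sqrt A with hSdef
  have hS0 : 0 ≤ S := Real.sqrt_nonneg A
  have hS2 : S^2 = 4*m^2 + 4*b^2 := by
    rw [hSdef, Real.sq_sqrt (by rw [hAeq]; positivity), hAeq]
  clear_value S
  have hST : S^2 - (1-2*p)^2 = 16*p*(1-p)*(c*s)^2 := by
    rw [hS2, hm, hb]
    linear_combination ((1-2*p)^2*(s^2+c^2+1))*hcs
  have htS : (1-2*p)^2 ≤ S^2 := by
    nlinarith [hST, mul_nonneg (mul_nonneg hp0 (by linarith : (0:ℝ) ≤ 1-p)) (sq_nonneg (c*s))]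
  constructor
  · -- membership: the optimal POVM element
    refine ⟨!![1/2 - m/S, -b/S; -b/S, 1/2 + m/S], ?_, ?_, ?_⟩
    · apply psd2
      · rcases eq_or_lt_of_le hS0 with h|h
        · have : m = 0 := by nlinarith [hS2]
          rw [this, ← h]; norm_num
        · have hmS : m ≤ S/2 := by nlinarith [hS2, sq_nonneg b]
          have : m/S ≤ 1/2 := by rw [div_le_iff₀ h]; linarith
          linarith
      · rcases eq_or_lt_of_le hS0 with h|h
        · have : m = 0 := by nlinarith [hS2]
          rw [this, ← h]; norm_num
        · have hmS : -(S/2) ≤ m := by nlinarith [hS2, sq_nonneg b]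
          have : -(1/2) ≤ m/S := by rw [le_div_iff₀ h]; linarith
          linarith
      · rcases eq_or_lt_of_le hS0 with h|h
        · rw [← h]; norm_num
        · have hne : S ≠ 0 := ne_of_gt h
          have heq : (1/2 - m/S) * (1/2 + m/S) = 1/4 - m^2/S^2 := by ring
          have h4 : m^2/S^2 + b^2/S^2 = 1/4 := by
            field_simp
            nlinarith [hS2]
          have heq2 : (-b/S)^2 = b^2/S^2 := by ring
          rw [heq, heq2]; linarith
    · have hone : (1 : Matrix (Fin 2) (Fin 2) ℝ) - !![1/2 - m/S, -b/S; -b/S, 1/2 + m/S]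
          = !![1/2 + m/S, b/S; b/S, 1/2 - m/S] := by
        ext i j
        fin_cases i <;> fin_cases j <;>
          simp [Matrix.sub_apply, Matrix.one_apply] <;> ring
      rw [hone]
      apply psd2
      · rcases eq_or_lt_of_le hS0 with h|h
        · have : m = 0 := by nlinarith [hS2]
          rw [this, ← h]; norm_num
        · have hmS : -(S/2) ≤ m := by nlinarith [hS2, sq_nonneg b]
          have : -(1/2) ≤ m/S := by rw [le_div_iff₀ h]; linarith
          linarith
      · rcases eq_or_lt_of_le hS0 with h|h
        · have : m = 0 := by nlinarith [hS2]
          rw [this, ← h]; norm_num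
        · have hmS : m ≤ S/2 := by nlinarith [hS2, sq_nonneg b]
          have : m/S ≤ 1/2 := by rw [div_le_iff₀ h]; linarith
          linarith
      · rcases eq_or_lt_of_le hS0 with h|h
        · rw [← h]; norm_num
        · have hne : S ≠ 0 := ne_of_gt h
          have heq : (1/2 + m/S) * (1/2 - m/S) = 1/4 - m^2/S^2 := by ring
          have h4 : m^2/S^2 + b^2/S^2 = 1/4 := by
            field_simp
            nlinarith [hS2]
          have heq2 : (b/S)^2 = b^2/S^2 := by ring
          rw [heq, heq2]; linarith
    · -- the value achieved
      have hone : (1 : Matrix (Fin 2) (Fin 2) ℝ) - !![1/2 - m/S, -b/S; -b/S, 1/2 + m/S]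
          = !![1/2 + m/S, b/S; b/S, 1/2 - m/S] := by
        ext i j
        fin_cases i <;> fin_cases j <;>
          simp [Matrix.sub_apply, Matrix.one_apply] <;> ring
      rw [hone, hψ, hφ]
      have hval : p * ((vecMulVec ![c, s] ![c, s]) *
            (!![1/2 + m/S, b/S; b/S, 1/2 - m/S] : Matrix (Fin 2) (Fin 2) ℝ)).trace
          + (1 - p) * ((vecMulVec ![c, -s] ![c, -s]) *
            (!![1/2 - m/S, -b/S; -b/S, 1/2 + m/S] : Matrix (Fin 2) (Fin 2) ℝ)).trace
          = (s^2 + c^2)/2 + ((2*p-1)*(c^2-s^2))*(m/S) + (2*c*s)*(b/S) := by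
        simp [Matrix.trace_fin_two, Matrix.mul_apply, Fin.sum_univ_two, vecMulVec_apply]
        ring
      have hval2 : ((2*p-1)*(c^2-s^2))*(m/S) + (2*c*s)*(b/S)
          = (-2*m)*(m/S) + (-2*b)*(b/S) := by
        rw [hm, hb]; ring
      have hfin : (-2*m)*(m/S) + (-2*b)*(b/S) = -(S/2) := by
        rcases eq_or_lt_of_le hS0 with h|h
        · have hm0 : m = 0 := by nlinarith [hS2]
          have hb0 : b = 0 := by nlinarith [hS2]
          rw [hm0, hb0, ← h]; ring
        · have hne : S ≠ 0 := ne_of_gt h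
          field_simp
          nlinarith [hS2]
      rw [hval, hcs]
      linarith [hval2, hfin]
  · -- lower bound
    rintro x ⟨E, hE, hIE, hxeq⟩
    obtain ⟨hsym, h00, h11, hdet⟩ := psd2' E hE
    obtain ⟨_, h00', h11', hdet'⟩ := psd2' _ hIE
    have e00 : (1 - E) 0 0 = 1 - E 0 0 := by simp [Matrix.sub_apply, Matrix.one_apply]
    have e11 : (1 - E) 1 1 = 1 - E 1 1 := by simp [Matrix.sub_apply, Matrix.one_apply]
    have e01 : (1 - E) 0 1 = - E 0 1 := by simp [Matrix.sub_apply, Matrix.one_apply]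
    rw [e00] at h00'; rw [e11] at h11'
    rw [e00, e11, e01] at hdet'
    have hxval : x = p*(s^2+c^2) + ((1-2*p)*c^2) * E 0 0 + ((1-2*p)*s^2) * E 1 1
        - 2*c*s*E 0 1 := by
      rw [hxeq, hψ, hφ]
      simp [Matrix.trace_fin_two, Matrix.mul_apply, Fin.sum_univ_two, vecMulVec_apply,
        Matrix.sub_apply, Matrix.one_apply, hsym]
      ring
    rw [hcs, mul_one] at hxval
    have hk := key_ineq (1-2*p) m b S (E 0 0 + E 1 1 - 1) (E 0 0 - E 1 1) (E 0 1)
      hS0 htS hS2 (by linarith) (by linarith)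
      (by nlinarith [hdet']) (by nlinarith [hdet])
    have hfinal : (1-2*p)*(E 0 0 + E 1 1 - 1)/2 + m*(E 0 0 - E 1 1) + 2*b*(E 0 1) + S/2
        = (p + ((1-2*p)*c^2)*E 0 0 + ((1-2*p)*s^2)*E 1 1 - 2*c*s*E 0 1) - 1/2*(1-S) := by
      rw [hm, hb]
      linear_combination (-(1-2*p)*(E 0 0 + E 1 1)/2) * hcs
    rw [hxval]
    linarith [hk, hfinal]
end

section
/- Let n = 4m with m ≥ 2 an integer, r_n = √(sec(π/n)), and let l ∈ {1,…,m−1} and k ∈ ℤ. If (1/2)(1 + r_n²·cos((4l+2k+1)π/n)) = (1/2)(1 − r_n²·cos((2k+1)π/n)) then there is a contradiction; i.e., for no integer k do the two conditional error probabilities in discriminating ω₀ from ω_{2l} coincide. -/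
open Real

/-- in the regular 4m-gon (m ≥ 2), for l ∈ {1,…,m−1} and any integer k,
the two conditional error probabilities in discriminating ω₀ from ω_{2l} never coincide. -/
theorem stmt_5 (m : ℕ) (hm : 2 ≤ m) (l : ℕ) (hl1 : 1 ≤ l) (hl2 : l ≤ m - 1) (k : ℤ) :
    (1/2) * (1 + (1 / Real.cos (π / (4 * m))) *
        Real.cos ((4 * (l : ℝ) + 2 * (k : ℝ) + 1) * π / (4 * m))) ≠
    (1/2) * (1 - (1 / Real.cos (π / (4 * m))) *
        Real.cos ((2 * (k : ℝ) + 1) * π / (4 * m))) := by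
  intro h
  have hm0 : (0:ℝ) < (m:ℝ) := by positivity
  have hm2r : (2:ℝ) ≤ (m:ℝ) := by exact_mod_cast hm
  have hπ := Real.pi_pos
  have hlt : π / (4 * (m:ℝ)) < π / 2 := by
    apply div_lt_div_of_pos_left hπ (by norm_num)
    nlinarith
  have hcospos : 0 < Real.cos (π / (4 * (m:ℝ))) := by
    apply Real.cos_pos_of_mem_Ioo
    constructor
    · have : (0:ℝ) < π / (4 * (m:ℝ)) := by positivity
      linarith
    · exact hlt
  have hs : (1 / Real.cos (π / (4 * (m:ℝ)))) ≠ 0 := by positivity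
  have hsum : Real.cos ((4 * (l : ℝ) + 2 * (k : ℝ) + 1) * π / (4 * m))
      + Real.cos ((2 * (k : ℝ) + 1) * π / (4 * m)) = 0 := by
    have := mul_left_cancel₀ (a := (1/2 : ℝ)) (by norm_num) h
    field_simp at this
    ring_nf at this ⊢
    linarith
  rw [Real.cos_add_cos] at hsum
  have hA : ((4 * (l : ℝ) + 2 * (k : ℝ) + 1) * π / (4 * m)
      + (2 * (k : ℝ) + 1) * π / (4 * m)) / 2
      = (2 * (l:ℝ) + 2 * (k:ℝ) + 1) * π / (4 * m) := by
    field_simp; ring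
  have hB : ((4 * (l : ℝ) + 2 * (k : ℝ) + 1) * π / (4 * m)
      - (2 * (k : ℝ) + 1) * π / (4 * m)) / 2
      = (l:ℝ) * π / (2 * m) := by
    field_simp; ring
  rw [hA, hB] at hsum
  have hm' : (4 * (m:ℝ)) ≠ 0 := by positivity
  rcases mul_eq_zero.1 hsum with h1 | h2
  · rcases mul_eq_zero.1 h1 with h0 | hc
    · norm_num at h0
    · rcases Real.cos_eq_zero_iff.1 hc with ⟨j, hj⟩
      have key : ((2 * (l:ℝ) + 2 * (k:ℝ) + 1) * 2) = ((2 * (j:ℝ) + 1) * (4 * m)) := by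
        apply mul_right_cancel₀ Real.pi_ne_zero
        field_simp at hj
        linear_combination π * hj
      have hz : (2 * (l:ℤ) + 2 * k + 1) * 2 = (2 * j + 1) * (4 * (m:ℤ)) := by
        exact_mod_cast key
      have hd : (4:ℤ) ∣ (2 * j + 1) * (4 * (m:ℤ)) := ⟨(2 * j + 1) * m, by ring⟩
      rw [← hz] at hd
      omega
  · rcases Real.cos_eq_zero_iff.1 h2 with ⟨j, hj⟩
    have key : ((l:ℝ) * 2) = ((2 * (j:ℝ) + 1) * (2 * m)) := by
      apply mul_right_cancel₀ Real.pi_ne_zero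
      field_simp at hj
      linear_combination (2 * π) * hj
    have hz : (l:ℤ) * 2 = (2 * j + 1) * (2 * (m:ℤ)) := by exact_mod_cast key
    have hlm : (l:ℤ) ≤ (m:ℤ) - 1 := by
      have h1 := hl2; have h2 := hm; omega
    have hl1' : (1:ℤ) ≤ (l:ℤ) := by exact_mod_cast hl1
    have hm2 : (2:ℤ) ≤ (m:ℤ) := by exact_mod_cast hm
    rcases le_or_gt 0 j with hj0 | hj0
    · have : (1:ℤ) * (2 * m) ≤ (2 * j + 1) * (2 * m) := by
        apply mul_le_mul_of_nonneg_right (by linarith) (by linarith)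
      linarith
    · have : (2 * j + 1) * (2 * (m:ℤ)) ≤ (-1) * (2 * m) := by
        apply mul_le_mul_of_nonneg_right (by linarith) (by linarith)
      linarith
end

section
/- Let n ≥ 3 be odd and r_n = √(sec(π/n)). For the effects e_i = (1/(1+r_n²))·(r_n cos(2πi/n), r_n sin(2πi/n), 1) and states ω_j = (r_n cos(2πj/n), r_n sin(2πj/n), 1), one has e_i·ω_j ∈ [0,1] for all i, j, with e_i·ω_i = 1 and e_i·ω_j = 0 exactly when 2π(i−j)/n differs from π by ±π/n, i.e., j ≡ i + (n±1)/2 (mod n). -/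
open Real Matrix



lemma aux1 (n m : ℕ) (hn : 3 ≤ n) (h : 2*m + 1 ≤ n) :
    -Real.cos (π/n) ≤ Real.cos (2*π*m/n) ∧
    (Real.cos (2*π*m/n) = -Real.cos (π/n) ↔ 2*m + 1 = n) := by
  have hn0 : (0:ℝ) < n := by exact_mod_cast by omega
  have hπn : 0 < π / n := by positivity
  have hx0 : 0 ≤ 2*π*(m:ℝ)/n := by positivity
  have hmle : (2*(m:ℝ)) ≤ (n:ℝ) - 1 := by
    have : ((2*m+1 : ℕ):ℝ) ≤ (n:ℝ) := by exact_mod_cast h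
    push_cast at this; linarith
  have hval : π*((n:ℝ)-1)/n = π - π/n := by field_simp
  have hxle : 2*π*(m:ℝ)/n ≤ π - π/n := by
    rw [← hval, div_le_div_iff₀ hn0 hn0]
    nlinarith [Real.pi_pos, mul_pos Real.pi_pos hn0]
  have hub : π - π/n ≤ π := by linarith
  have hlb : Real.cos (π - π/n) = -Real.cos (π/n) := Real.cos_pi_sub _
  have hbd : Real.cos (π - π/n) ≤ Real.cos (2*π*m/n) :=
    Real.cos_le_cos_of_nonneg_of_le_pi hx0 hub hxle
  constructor
  · linarith [hbd, hlb.symm.le]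
  constructor
  · intro hEq
    by_contra hne
    have h2 : 2*m + 2 ≤ n := by omega
    have hmle2 : (2*(m:ℝ)) ≤ (n:ℝ) - 2 := by
      have : ((2*m+2 : ℕ):ℝ) ≤ (n:ℝ) := by exact_mod_cast h2
      push_cast at this; linarith
    have hxlt : 2*π*(m:ℝ)/n < π - π/n := by
      rw [← hval, div_lt_div_iff₀ hn0 hn0]
      nlinarith [Real.pi_pos, mul_pos Real.pi_pos hn0]
    have := Real.strictAntiOn_cos ⟨hx0, by linarith⟩ ⟨by linarith, hub⟩ hxlt
    rw [hlb, hEq] at this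
    linarith
  · intro hEq
    have : (2*(m:ℝ)) = (n:ℝ) - 1 := by
      have : ((2*m+1 : ℕ):ℝ) = (n:ℝ) := by exact_mod_cast hEq
      push_cast at this; linarith
    have hx : 2*π*(m:ℝ)/n = π - π/n := by
      rw [← hval]; field_simp; nlinarith [Real.pi_pos]
    rw [hx, hlb]

lemma cos_bound (n m : ℕ) (hn : 3 ≤ n) (hodd : Odd n) (hm : m < n) :
    -Real.cos (π/n) ≤ Real.cos (2*π*m/n) ∧
    (Real.cos (2*π*m/n) = -Real.cos (π/n) ↔ (2*m = n - 1 ∨ 2*m = n + 1)) := by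
  obtain ⟨t, ht⟩ := hodd
  rcases le_or_gt (2*m+1) n with h | h
  · obtain ⟨hb, hiff⟩ := aux1 n m hn h
    exact ⟨hb, hiff.trans (by omega)⟩
  · have h2 : 2*(n-m)+1 ≤ n := by omega
    have hcast : 2*π*(m:ℝ)/n = 2*π - 2*π*((n-m : ℕ):ℝ)/n := by
      have hn0 : (n:ℝ) ≠ 0 := by positivity
      rw [Nat.cast_sub hm.le]; field_simp; ring
    rw [hcast, Real.cos_two_pi_sub]
    obtain ⟨hb, hiff⟩ := aux1 n (n-m) hn h2
    exact ⟨hb, hiff.trans (by omega)⟩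

lemma modeq_iff (n i j s : ℕ) (hi : i < n) (hs : s < n) :
    (j ≡ i + s [MOD n]) ↔ (j + n - i) % n = s := by
  have ha : (j + n - i) + i = j + n := by omega
  have hjn : (j + n) ≡ j [MOD n] := Nat.add_mod_right j n
  constructor
  · intro h
    have h1 : (j + n) ≡ (i + s) [MOD n] := hjn.trans h
    have h2 : (j + n - i) + i ≡ s + i [MOD n] := by
      rw [ha]; simpa [Nat.add_comm] using h1
    have h3 := Nat.ModEq.add_right_cancel' i h2
    calc (j+n-i) % n = s % n := h3
    _ = s := Nat.mod_eq_of_lt hs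
  · intro h
    have h3 : (j + n - i) ≡ s [MOD n] := h.trans (Nat.mod_eq_of_lt hs).symm
    have h2 := h3.add_right i
    rw [ha] at h2
    refine hjn.symm.trans (h2.trans ?_)
    rw [Nat.add_comm]


/-- for odd n ≥ 3 and r_n² = sec(π/n), the functionals
e_i = (1/(1+r_n²))(r_n cos(2πi/n), r_n sin(2πi/n), 1) are valid effects on the
pure states ω_j = (r_n cos(2πj/n), r_n sin(2πj/n), 1): e_i·ω_j ∈ [0,1], with
e_i·ω_i = 1 and e_i·ω_j = 0 precisely when j ≡ i + (n+1)/2 or j ≡ i + (n−1)/2 (mod n). -/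
theorem stmt_16 (n : ℕ) (hn : 3 ≤ n) (hodd : Odd n)
    (rn : ℝ) (hrn : rn = Real.sqrt (1 / Real.cos (π / n)))
    (ω e : ℕ → (Fin 3 → ℝ))
    (hω : ∀ j : ℕ, ω j = ![rn * Real.cos (2 * π * j / n), rn * Real.sin (2 * π * j / n), 1])
    (he : ∀ i : ℕ, e i = (1 / (1 + rn ^ 2)) •
      ![rn * Real.cos (2 * π * i / n), rn * Real.sin (2 * π * i / n), 1]) :
    ∀ i < n, ∀ j < n,
      (0 ≤ dotProduct (e i) (ω j) ∧ dotProduct (e i) (ω j) ≤ 1) ∧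
      dotProduct (e i) (ω i) = 1 ∧
      (dotProduct (e i) (ω j) = 0 ↔
        (j ≡ i + (n + 1) / 2 [MOD n] ∨ j ≡ i + (n - 1) / 2 [MOD n])) := by
  set c := Real.cos (π / n) with hc_def
  have hn0 : (0:ℝ) < n := by exact_mod_cast by omega
  have hπn : 0 < π / n := by positivity
  have hπn2 : π / n < π / 2 := by
    apply div_lt_div_of_pos_left Real.pi_pos (by norm_num)
    exact_mod_cast by omega
  have hc : 0 < c := Real.cos_pos_of_mem_Ioo ⟨by linarith, hπn2⟩
  have hc1 : (0:ℝ) < c + 1 := by linarith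
  have hrn2 : rn ^ 2 = 1 / c := by
    rw [hrn, Real.sq_sqrt (by positivity)]
  have hdot : ∀ i j : ℕ, dotProduct (e i) (ω j) =
      (c + Real.cos (2 * π * j / n - 2 * π * i / n)) / (c + 1) := by
    intro i j
    rw [he, hω, Real.cos_sub]
    simp [dotProduct, Fin.sum_univ_three]
    have h1 : c * rn ^ 2 = 1 := by rw [hrn2]; field_simp
    field_simp
    linear_combination ((Real.cos (2*π*j/n) * Real.cos (2*π*i/n) +
      Real.sin (2*π*j/n) * Real.sin (2*π*i/n)) - 1) * h1
  intro i hi j hj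
  obtain ⟨m, hm_def⟩ : ∃ m, m = (j + n - i) % n := ⟨_, rfl⟩
  have hmlt : m < n := by rw [hm_def]; exact Nat.mod_lt _ (by omega)
  have hcos_eq : Real.cos (2*π*j/n - 2*π*i/n) = Real.cos (2*π*m/n) := by
    obtain ⟨q, hdiv⟩ : ∃ q, j + n = i + (n * q + m) :=
      ⟨(j + n - i) / n, by have := Nat.div_add_mod (j + n - i) n; omega⟩
    have hcastd : (j:ℝ) + n = i + (n*q + m) := by exact_mod_cast congrArg (Nat.cast (R := ℝ)) hdiv
    have hang : 2*π*(j:ℝ)/n - 2*π*(i:ℝ)/n = 2*π*(m:ℝ)/n + (((q:ℤ) - 1 : ℤ) : ℝ) * (2*π) := by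
      push_cast
      field_simp
      linear_combination hcastd
    rw [hang, Real.cos_add_int_mul_two_pi]
  obtain ⟨hb, hiff⟩ := cos_bound n m hn hodd hmlt
  have hcos1 : Real.cos (2*π*(m:ℝ)/n) ≤ 1 := Real.cos_le_one _
  refine ⟨⟨?_, ?_⟩, ?_, ?_⟩
  · rw [hdot, hcos_eq]
    apply div_nonneg (by linarith) (by linarith)
  · rw [hdot, hcos_eq, div_le_one hc1]
    linarith
  · rw [hdot i i, sub_self, Real.cos_zero]
    field_simp
  · rw [hdot, hcos_eq]
    have hs1 : (n+1)/2 < n := by omega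
    have hs2 : (n-1)/2 < n := by omega
    rw [modeq_iff n i j ((n+1)/2) hi hs1, modeq_iff n i j ((n-1)/2) hi hs2]
    constructor
    · intro h
      have h0 : c + Real.cos (2*π*m/n) = 0 := by
        rcases div_eq_zero_iff.mp h with h' | h'
        · exact h'
        · linarith
      have := hiff.mp (by linarith)
      obtain ⟨t, ht⟩ := hodd
      omega
    · intro h
      have h2 : (2*m = n - 1 ∨ 2*m = n + 1) := by
        obtain ⟨t, ht⟩ := hodd
        omega
      have := hiff.mpr h2
      rw [this]
      field_simp
      rw [hc_def]; ring
end
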